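/- A rational polyhedral cone σ in a finite-dimensional ℚ-vector space V (generated by finitely many vectors with nonnegative rational coefficients) satisfies: the double dual (σ∨)∨ equals σ, where σ∨ = {ℓ ∈ V* | ℓ(v) ≥ 0 for all v ∈ σ}. -/

import Mathlib

open scoped BigOperators

/-- The cone generated by a finite family of vectors: all nonnegative rational
combinations of the generators. -/
def coneGen {V : Type*} [AddCommGroup V] [Module ℚ V] {k : ℕ} (g : Fin k → V) : Set V :=
  {x | ∃ c : Fin k → ℚ, (∀ i, 0 ≤ c i) ∧ x = ∑ i, c i • g i}

/-- A (rational) polyhedral cone: the set of nonnegative combinations of finitely many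
vectors. -/
def IsPolyCone {V : Type*} [AddCommGroup V] [Module ℚ V] (σ : Set V) : Prop :=
  ∃ (k : ℕ) (g : Fin k → V), σ = coneGen g

/-- The dual cone inside the dual space: functionals nonnegative on `σ`. -/
def dualConeD {V : Type*} [AddCommGroup V] [Module ℚ V] (σ : Set V) :
    Set (Module.Dual ℚ V) :=
  {ℓ | ∀ v ∈ σ, 0 ≤ ℓ v}

lemma farkas {V : Type*} [AddCommGroup V] [Module ℚ V] [FiniteDimensional ℚ V] :
    ∀ (k : ℕ) (g : Fin k → V) (v : V), v ∉ coneGen g →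
      ∃ ℓ : Module.Dual ℚ V, (∀ i, 0 ≤ ℓ (g i)) ∧ ℓ v < 0 := by
  intro k
  induction k with
  | zero =>
    intro g v hv
    have hv0 : v ≠ 0 := by
      rintro rfl
      exact hv ⟨0, fun i => le_rfl, by simp⟩
    obtain ⟨ℓ, hℓ⟩ : ∃ ℓ : Module.Dual ℚ V, ℓ v ≠ 0 := by
      by_contra hc
      push_neg at hc
      exact hv0 ((Module.forall_dual_apply_eq_zero_iff ℚ v).mp hc)
    rcases lt_or_gt_of_ne hℓ with h1 | h1
    · exact ⟨ℓ, fun i => i.elim0, h1⟩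
    · exact ⟨-ℓ, fun i => i.elim0, by simpa using h1⟩
  | succ k ih =>
    intro g v hv
    set g' : Fin k → V := fun i => g i.castSucc with hg'
    set w : V := g (Fin.last k) with hwdef
    by_cases hvg' : v ∈ coneGen g'
    · exfalso
      obtain ⟨c, hc, hsum⟩ := hvg'
      refine hv ⟨Fin.snoc c 0, ?_, ?_⟩
      · intro i
        refine Fin.lastCases ?_ ?_ i
        · simp
        · intro j; simpa using hc j
      · rw [Fin.sum_univ_castSucc]
        simpa using hsum
    obtain ⟨ℓ, hℓg, hℓv⟩ := ih g' v hvg'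
    by_cases hw : 0 ≤ ℓ w
    · refine ⟨ℓ, ?_, hℓv⟩
      intro i
      refine Fin.lastCases ?_ ?_ i
      · exact hw
      · intro j; exact hℓg j
    push_neg at hw
    have hwne : ℓ w ≠ 0 := ne_of_lt hw
    set q : Fin k → V := fun i => g' i - (ℓ (g' i) / ℓ w) • w with hq
    set p : V := v - (ℓ v / ℓ w) • w with hp
    have hpq : p ∉ coneGen q := by
      rintro ⟨c, hc, hsum⟩
      set μ : ℚ := (ℓ v - ∑ i, c i * ℓ (g' i)) / ℓ w with hμ
      have hμpos : 0 ≤ μ := by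
        have hS : 0 ≤ ∑ i, c i * ℓ (g' i) :=
          Finset.sum_nonneg fun i _ => mul_nonneg (hc i) (hℓg i)
        have hnum : ℓ v - ∑ i, c i * ℓ (g' i) < 0 := by linarith
        exact le_of_lt (div_pos_of_neg_of_neg hnum hw)
      apply hv
      refine ⟨Fin.snoc c μ, ?_, ?_⟩
      · intro i
        refine Fin.lastCases ?_ ?_ i
        · simpa using hμpos
        · intro j; simpa using hc j
      · rw [Fin.sum_univ_castSucc]
        simp only [Fin.snoc_castSucc, Fin.snoc_last]
        have : v = p + (ℓ v / ℓ w) • w := by rw [hp]; abel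
        rw [this, hsum]
        simp only [hq, smul_sub, smul_smul]
        rw [Finset.sum_sub_distrib, ← Finset.sum_smul]
        have hcoef : ℓ v / ℓ w - (∑ i, c i * (ℓ (g' i) / ℓ w)) = μ := by
          rw [hμ, sub_div, Finset.sum_div]
          congr 1
          exact Finset.sum_congr rfl fun i _ => (mul_div_assoc _ _ _).symm
        rw [sub_add_eq_add_sub, add_sub_assoc, ← sub_smul, hcoef]
    obtain ⟨m, hmq, hmp⟩ := ih q p hpq
    refine ⟨m - (m w / ℓ w) • ℓ, ?_, ?_⟩
    · intro i
      refine Fin.lastCases ?_ ?_ i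
      · show 0 ≤ (m - (m w / ℓ w) • ℓ) w
        simp [hwne]
      · intro j
        have := hmq j
        simp only [hq, map_sub, map_smul, smul_eq_mul] at this ⊢
        rw [LinearMap.sub_apply, LinearMap.smul_apply, smul_eq_mul]
        calc m (g' j) - m w / ℓ w * ℓ (g' j)
            = m (g' j) - ℓ (g' j) / ℓ w * m w := by ring
          _ ≥ 0 := by linarith
    · have := hmp
      simp only [hp, map_sub, map_smul, smul_eq_mul] at this
      rw [LinearMap.sub_apply, LinearMap.smul_apply, smul_eq_mul]
      calc m v - m w / ℓ w * ℓ v = m v - ℓ v / ℓ w * m w := by ring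
        _ < 0 := this

/-- The double dual of a polyhedral cone (computed inside `V ≅ V**`) equals the cone. -/
theorem stmt1 {V : Type*} [AddCommGroup V] [Module ℚ V] [FiniteDimensional ℚ V]
    (σ : Set V) (h : IsPolyCone σ) :
    {v : V | ∀ ℓ ∈ dualConeD σ, 0 ≤ ℓ v} = σ := by
  obtain ⟨k, g, rfl⟩ := h
  ext v
  simp only [Set.mem_setOf_eq]
  constructor
  · intro hv
    by_contra hvc
    obtain ⟨ℓ, hℓg, hℓv⟩ := farkas k g v hvc
    have hmem : ℓ ∈ dualConeD (coneGen g) := by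
      rintro x ⟨c, hc, rfl⟩
      rw [map_sum]
      exact Finset.sum_nonneg fun i _ => by
        rw [map_smul, smul_eq_mul]; exact mul_nonneg (hc i) (hℓg i)
    exact absurd (hv ℓ hmem) (not_le.mpr hℓv)
  · rintro ⟨c, hc, rfl⟩ ℓ hℓ
    exact hℓ _ ⟨c, hc, rfl⟩
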